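/- Let R¹ : ℝ^q → ℝ^q be c₁-Lipschitz with c₁ ∈ [0,1) and R² : ℝ^q → ℝ^q nonexpansive. Define g : ℝ^{2q} → ℝ^{2q} by g(v₁, v₂) = ½(R²(v₂) + v₁, R¹(v₁) + v₂). Then g is Lipschitz continuous with constant √(3 + c₁²)/2 < 1. -/

import Mathlib

theorem stmt_18 (q : ℕ)
    (R1 R2 : EuclideanSpace ℝ (Fin q) → EuclideanSpace ℝ (Fin q))
    (c1 : ℝ) (hc10 : 0 ≤ c1) (hc11 : c1 < 1)
    (hR1 : ∀ x y, ‖R1 x - R1 y‖ ≤ c1 * ‖x - y‖)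
    (hR2 : ∀ x y, ‖R2 x - R2 y‖ ≤ ‖x - y‖)
    (g : WithLp 2 (EuclideanSpace ℝ (Fin q) × EuclideanSpace ℝ (Fin q)) →
      WithLp 2 (EuclideanSpace ℝ (Fin q) × EuclideanSpace ℝ (Fin q)))
    (hg : ∀ v, g v =
      (WithLp.equiv 2 (EuclideanSpace ℝ (Fin q) × EuclideanSpace ℝ (Fin q))).symm
        (((1 : ℝ) / 2) • (R2 ((WithLp.equiv 2 _) v).2 + ((WithLp.equiv 2 _) v).1),
         ((1 : ℝ) / 2) • (R1 ((WithLp.equiv 2 _) v).1 + ((WithLp.equiv 2 _) v).2))) :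
    (∀ v w, ‖g v - g w‖ ≤ (Real.sqrt (3 + c1 ^ 2) / 2) * ‖v - w‖) ∧
      Real.sqrt (3 + c1 ^ 2) / 2 < 1 := by
  have hpos : (0:ℝ) < 3 + c1 ^ 2 := by positivity
  have hsq : Real.sqrt (3 + c1 ^ 2) ^ 2 = 3 + c1 ^ 2 := Real.sq_sqrt hpos.le
  have hsnn : 0 ≤ Real.sqrt (3 + c1 ^ 2) := Real.sqrt_nonneg _
  constructor
  · intro v w
    set v1 := ((WithLp.equiv 2 (EuclideanSpace ℝ (Fin q) × EuclideanSpace ℝ (Fin q))) v).1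
    set v2 := ((WithLp.equiv 2 (EuclideanSpace ℝ (Fin q) × EuclideanSpace ℝ (Fin q))) v).2
    set w1 := ((WithLp.equiv 2 (EuclideanSpace ℝ (Fin q) × EuclideanSpace ℝ (Fin q))) w).1
    set w2 := ((WithLp.equiv 2 (EuclideanSpace ℝ (Fin q) × EuclideanSpace ℝ (Fin q))) w).2
    set a := ‖v1 - w1‖ with ha
    set b := ‖v2 - w2‖ with hb
    have ha0 : 0 ≤ a := norm_nonneg _
    have hb0 : 0 ≤ b := norm_nonneg _
    have hfst : (g v - g w).fst = ((1:ℝ)/2) • (R2 v2 + v1) - ((1:ℝ)/2) • (R2 w2 + w1) := by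
      rw [hg v, hg w]; rfl
    have hsnd : (g v - g w).snd = ((1:ℝ)/2) • (R1 v1 + v2) - ((1:ℝ)/2) • (R1 w1 + w2) := by
      rw [hg v, hg w]; rfl
    have h1 : ‖(g v - g w).fst‖ ≤ (1/2) * (b + a) := by
      rw [hfst, ← smul_sub]
      rw [norm_smul]
      rw [Real.norm_eq_abs, abs_of_nonneg (by norm_num : (0:ℝ) ≤ 1/2)]
      have : (R2 v2 + v1) - (R2 w2 + w1) = (R2 v2 - R2 w2) + (v1 - w1) := by abel
      rw [this]
      have := norm_add_le (R2 v2 - R2 w2) (v1 - w1)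
      have h2 := hR2 v2 w2
      nlinarith
    have h2 : ‖(g v - g w).snd‖ ≤ (1/2) * (c1 * a + b) := by
      rw [hsnd, ← smul_sub]
      rw [norm_smul]
      rw [Real.norm_eq_abs, abs_of_nonneg (by norm_num : (0:ℝ) ≤ 1/2)]
      have : (R1 v1 + v2) - (R1 w1 + w2) = (R1 v1 - R1 w1) + (v2 - w2) := by abel
      rw [this]
      have := norm_add_le (R1 v1 - R1 w1) (v2 - w2)
      have h2 := hR1 v1 w1
      nlinarith
    have hvw : ‖v - w‖ ^ 2 = a ^ 2 + b ^ 2 := by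
      rw [WithLp.prod_norm_sq_eq_of_L2]
      congr 1
    have hgvw : ‖g v - g w‖ ^ 2 = ‖(g v - g w).fst‖ ^ 2 + ‖(g v - g w).snd‖ ^ 2 :=
      WithLp.prod_norm_sq_eq_of_L2 _
    have key : ‖g v - g w‖ ^ 2 ≤ ((Real.sqrt (3 + c1 ^ 2) / 2) * ‖v - w‖) ^ 2 := by
      rw [hgvw]
      have : ((Real.sqrt (3 + c1 ^ 2) / 2) * ‖v - w‖) ^ 2
          = (3 + c1 ^ 2) / 4 * (a ^ 2 + b ^ 2) := by
        rw [mul_pow, div_pow, hsq, hvw]; ring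
      rw [this]
      have hn1 : 0 ≤ ‖(g v - g w).fst‖ := norm_nonneg _
      have hn2 : 0 ≤ ‖(g v - g w).snd‖ := norm_nonneg _
      nlinarith [sq_nonneg (a - b), sq_nonneg (a - c1 * b), sq_nonneg ‖(g v - g w).fst‖,
        mul_nonneg ha0 hb0]
    have hrhs : 0 ≤ (Real.sqrt (3 + c1 ^ 2) / 2) * ‖v - w‖ := by positivity
    nlinarith [norm_nonneg (g v - g w)]
  · rw [div_lt_one (by norm_num : (0:ℝ) < 2)]
    rw [show (2:ℝ) = Real.sqrt 4 by rw [show (4:ℝ) = 2^2 by norm_num, Real.sqrt_sq]; norm_num]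
    exact Real.sqrt_lt_sqrt hpos.le (by nlinarith)
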